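/- Let m ≥ 2 be a squarefree integer with exactly r distinct prime factors. For every natural number n ≥ 1 and every T ∈ {0, 1, …, n}, there exists a multivariate polynomial P in n variables over ℤ_m with total degree at most m·⌈(n+1)^{1/r}⌉, such that for every Boolean vector a ∈ {0,1}^n, P(a) = 0 in ℤ_m if and only if |a|₁ = T. -/

import Mathlib

open MvPolynomial Finset


/-- `rootCeil r N` is the least natural number whose `r`-th power is at least `N`
(the ceiling of the real `r`-th root of `N`). -/
noncomputable def rootCeil (r N : ℕ) : ℕ := sInf {k : ℕ | N ≤ k ^ r}



lemma eval_esymm_bool {n : ℕ} {R : Type*} [CommRing R] (a : Fin n → Bool) (k : ℕ) :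
    MvPolynomial.eval (fun i => if a i then (1 : R) else 0) (MvPolynomial.esymm (Fin n) R k)
      = ((Finset.univ.filter fun i => a i = true).card.choose k : R) := by
  rw [MvPolynomial.esymm, map_sum]
  simp only [map_prod, eval_X]
  rw [← Finset.card_powersetCard]
  have : ∀ t ∈ Finset.powersetCard k (univ : Finset (Fin n)),
      (∏ i ∈ t, (if a i then (1:R) else 0)) = if t ∈ Finset.powersetCard k (Finset.univ.filter fun i => a i = true) then 1 else 0 := by
    intro t ht
    rw [Finset.prod_boole]
    congr 1
    simp only [Finset.mem_powersetCard_univ] at ht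
    simp [Finset.mem_powersetCard, Finset.subset_iff, ht, eq_self_iff_true]
  rw [Finset.sum_congr rfl this, Finset.sum_ite_mem, Finset.sum_const]
  have : Finset.powersetCard k Finset.univ ∩ Finset.powersetCard k (Finset.univ.filter fun i => a i = true) = Finset.powersetCard k (Finset.univ.filter fun i => a i = true) := by
    apply Finset.inter_eq_right.mpr
    exact Finset.powersetCard_mono (Finset.subset_univ _)
  rw [this]
  simp

lemma choose_pow_modEq_digit {p : ℕ} (hp : p.Prime) (s j : ℕ) :
    Nat.choose s (p ^ j) ≡ s / p ^ j [MOD p] := by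
  haveI : Fact p.Prime := ⟨hp⟩
  induction j generalizing s with
  | zero => simp [Nat.ModEq.refl]
  | succ j ih =>
    have h := @Choose.choose_modEq_choose_mod_mul_choose_div_nat s (p ^ (j+1)) p ⟨hp⟩
    have h1 : p ^ (j+1) % p = 0 := by
      simp [Nat.pow_succ, Nat.mul_mod_left]
    have h2 : p ^ (j+1) / p = p ^ j := by
      rw [pow_succ, Nat.mul_div_cancel _ hp.pos]
    rw [h1, h2, Nat.choose_zero_right, one_mul] at h
    calc Nat.choose s (p^(j+1)) ≡ Nat.choose (s / p) (p ^ j) [MOD p] := h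
      _ ≡ (s / p) / p ^ j [MOD p] := ih (s / p)
      _ = s / p ^ (j+1) := by rw [Nat.div_div_eq_div_mul, ← _root_.pow_succ']

lemma digit_modEq_of_modEq_pow {p : ℕ} (hp : 0 < p) {s T t : ℕ} (h : s ≡ T [MOD p ^ t])
    {j : ℕ} (hj : j < t) : s / p ^ j ≡ T / p ^ j [MOD p] := by
  rcases le_total T s with hle | hle
  · obtain ⟨k, hk⟩ := (Nat.modEq_iff_dvd' hle).mp h.symm
    have hs : s = T + (k * p ^ (t - j)) * p ^ j := by
      rw [mul_assoc, ← pow_add, Nat.sub_add_cancel hj.le, mul_comm k, ← hk]; omega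
    rw [hs, Nat.add_mul_div_right _ _ (pow_pos hp j)]
    have : p ∣ k * p ^ (t - j) := Dvd.dvd.mul_left (dvd_pow_self p (by omega)) k
    exact ((Nat.modEq_iff_dvd' (Nat.le_add_right _ _)).mpr (by simpa using this)).symm
  · obtain ⟨k, hk⟩ := (Nat.modEq_iff_dvd' hle).mp h
    have hs : T = s + (k * p ^ (t - j)) * p ^ j := by
      rw [mul_assoc, ← pow_add, Nat.sub_add_cancel hj.le, mul_comm k, ← hk]; omega
    rw [hs, Nat.add_mul_div_right _ _ (pow_pos hp j)]
    have : p ∣ k * p ^ (t - j) := Dvd.dvd.mul_left (dvd_pow_self p (by omega)) k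
    exact (Nat.modEq_iff_dvd' (Nat.le_add_right _ _)).mpr (by simpa using this)

lemma modEq_pow_of_digits {p : ℕ} {s T : ℕ} :
    ∀ {t : ℕ}, (∀ j < t, s / p ^ j ≡ T / p ^ j [MOD p]) → s ≡ T [MOD p ^ t] := by
  intro t
  induction t with
  | zero => intro _; simp [Nat.ModEq, Nat.mod_one]
  | succ t ih =>
    intro h
    have h1 : s % p ^ t = T % p ^ t := ih (fun j hj => h j (by omega))
    have h2 : s / p ^ t % p = T / p ^ t % p := h t (by omega)
    show s % p ^ (t+1) = T % p ^ (t+1)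
    rw [pow_succ, Nat.mod_mul, Nat.mod_mul, h1, h2]

lemma zmod_zero_iff_primes {m : ℕ} (hm : 2 ≤ m) (hsf : Squarefree m) (x : ZMod m) :
    x = 0 ↔ ∀ p, ∀ hp : p ∈ m.primeFactors,
      (ZMod.castHom (Nat.dvd_of_mem_primeFactors hp) (ZMod p)) x = 0 := by
  haveI : NeZero m := ⟨by omega⟩
  constructor
  · rintro rfl p hp; simp
  · intro h
    have hv : ∀ p, p ∈ m.primeFactors → p ∣ x.val := by
      intro p hp
      have := h p hp
      rw [ZMod.castHom_apply, ← ZMod.natCast_val, ZMod.natCast_eq_zero_iff] at this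
      exact this
    have hdvd : (∏ p ∈ m.primeFactors, p) ∣ x.val :=
      Finset.prod_primes_dvd _ (fun p hp => (Nat.prime_of_mem_primeFactors hp).prime)
        (fun p hp => hv p hp)
    rw [Nat.prod_primeFactors_of_squarefree hsf] at hdvd
    exact (ZMod.val_eq_zero x).mp (Nat.eq_zero_of_dvd_of_lt hdvd (ZMod.val_lt x))

lemma geom_sum_nat (p t : ℕ) (hp : 1 ≤ p) :
    ∑ j ∈ Finset.range t, (p - 1) * p ^ j = p ^ t - 1 := by
  induction t with
  | zero => simp
  | succ t ih =>
    rw [Finset.sum_range_succ, ih]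
    have h1 : (p - 1) * p ^ t = p * p ^ t - p ^ t := by
      rw [Nat.sub_mul, one_mul]
    have h2 : 1 ≤ p ^ t := Nat.one_le_pow _ _ hp
    have h3 : p ^ t ≤ p * p ^ t := Nat.le_mul_of_pos_left _ hp
    rw [pow_succ, h1, mul_comm (p ^ t) p]
    omega

lemma totalDegree_esymm_le' {σ R : Type*} [CommSemiring R] [Fintype σ] [DecidableEq σ]
    [Nontrivial R] (k : ℕ) : (esymm σ R k).totalDegree ≤ k := by
  rw [esymm]
  refine (totalDegree_finset_sum _ _).trans ?_
  refine Finset.sup_le fun t ht => ?_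
  refine (totalDegree_finset_prod _ _).trans ?_
  rw [Finset.mem_powersetCard] at ht
  calc ∑ i ∈ t, (X i : MvPolynomial σ R).totalDegree = ∑ i ∈ t, 1 := by
        simp [totalDegree_X]
    _ = t.card := by simp
    _ ≤ k := ht.2.le

/-- Let `m ≥ 2` be squarefree with exactly `r` distinct prime factors. For every `n ≥ 1`
and every `T ∈ {0,…,n}`, there is a multivariate polynomial `P` in `n` variables over
`ℤ_m` of total degree at most `m·⌈(n+1)^{1/r}⌉` which vanishes at a Boolean vector `a`
exactly when `|a|₁ = T`. -/
theorem exists_exact_majority_polynomial_mod_m (m r : ℕ) (hm2 : 2 ≤ m)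
    (hsf : Squarefree m) (hr : m.primeFactors.card = r)
    (n : ℕ) (hn : 1 ≤ n) (T : ℕ) (hT : T ≤ n) :
    ∃ P : MvPolynomial (Fin n) (ZMod m),
      P.totalDegree ≤ m * rootCeil r (n + 1) ∧
      ∀ a : Fin n → Bool,
        (MvPolynomial.eval (fun k => if a k then (1 : ZMod m) else 0) P = 0 ↔
          (Finset.univ.filter fun k => a k = true).card = T) := by
  haveI : Fact (1 < m) := ⟨by omega⟩
  set c := rootCeil r (n + 1) with hc_def
  -- basic facts about r and c
  have hr1 : 1 ≤ r := by
    rw [← hr]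
    exact Finset.card_pos.mpr (Nat.nonempty_primeFactors.mpr (by omega))
  have hcr : n + 1 ≤ c ^ r :=
    Nat.sInf_mem (⟨n + 1, Nat.le_self_pow (by omega) _⟩ : Set.Nonempty {k : ℕ | n + 1 ≤ k ^ r})
  have hc1 : 1 ≤ c := by
    by_contra h
    have : c = 0 := by omega
    rw [this, zero_pow (by omega)] at hcr
    omega
  -- data per prime
  set t : ℕ → ℕ := fun p => Nat.clog p c with ht_def
  have hct : ∀ p ∈ m.primeFactors, c ≤ p ^ t p := fun p hp =>
    Nat.le_pow_clog (Nat.prime_of_mem_primeFactors hp).one_lt c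
  have hptc : ∀ p ∈ m.primeFactors, p ^ t p ≤ p * c := by
    intro p hp
    have hp2 : 2 ≤ p := (Nat.prime_of_mem_primeFactors hp).two_le
    rcases Nat.eq_zero_or_pos (t p) with h0 | h0
    · rw [h0, pow_zero]
      exact Nat.one_le_iff_ne_zero.mpr (by positivity)
    · have hlt : p ^ (t p - 1) < c :=
        (Nat.lt_clog_iff_pow_lt (by omega)).mp (by have hh : Nat.clog p c = t p := rfl; omega)
      calc p ^ t p = p * p ^ (t p - 1) := by
            rw [← _root_.pow_succ']; congr 1; omega
        _ ≤ p * c := Nat.mul_le_mul_left _ hlt.le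
  refine ⟨∑ p ∈ m.primeFactors, MvPolynomial.C ((m / p : ℕ) : ZMod m) *
      (1 - ∏ j ∈ Finset.range (t p),
        (1 - (MvPolynomial.esymm (Fin n) (ZMod m) (p ^ j)
          - MvPolynomial.C ((T / p ^ j % p : ℕ) : ZMod m)) ^ (p - 1))), ?_, ?_⟩
  · -- degree bound
    refine (totalDegree_finset_sum _ _).trans (Finset.sup_le fun p hp => ?_)
    have hp2 : 2 ≤ p := (Nat.prime_of_mem_primeFactors hp).two_le
    have hpm : p ≤ m := Nat.le_of_dvd (by omega) (Nat.dvd_of_mem_primeFactors hp)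
    refine (totalDegree_mul _ _).trans ?_
    rw [totalDegree_C, zero_add]
    refine (totalDegree_sub _ _).trans
      (max_le (by simp [totalDegree_one]) ?_)
    have hprod : (∏ j ∈ Finset.range (t p),
        ((1 : MvPolynomial (Fin n) (ZMod m)) - (MvPolynomial.esymm (Fin n) (ZMod m) (p ^ j)
          - MvPolynomial.C ((T / p ^ j % p : ℕ) : ZMod m)) ^ (p - 1))).totalDegree
        ≤ p ^ t p - 1 := by
      refine (totalDegree_finset_prod _ _).trans ?_
      rw [← geom_sum_nat p (t p) (by omega)]
      refine Finset.sum_le_sum fun j hj => ?_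
      refine (totalDegree_sub _ _).trans
        (max_le (by simp [totalDegree_one]) ?_)
      refine (totalDegree_pow _ _).trans (Nat.mul_le_mul_left _ ?_)
      refine (totalDegree_sub _ _).trans
        (max_le (totalDegree_esymm_le' _) (by rw [totalDegree_C]; exact Nat.zero_le _))
    refine hprod.trans ?_
    have h1 : p * c ≤ m * c := Nat.mul_le_mul_right _ hpm
    have h2 := hptc p hp
    omega
  · -- correctness
    intro a
    set s := (Finset.univ.filter fun k => a k = true).card with hs_def
    have hsn : s ≤ n := by
      rw [hs_def]
      exact (Finset.card_filter_le _ _).trans (by simp)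
    rw [map_sum]
    have heval : ∀ p ∈ m.primeFactors,
        (MvPolynomial.eval fun k => if a k then (1 : ZMod m) else 0)
          (MvPolynomial.C ((m / p : ℕ) : ZMod m) *
            (1 - ∏ j ∈ Finset.range (t p),
              (1 - (MvPolynomial.esymm (Fin n) (ZMod m) (p ^ j)
                - MvPolynomial.C ((T / p ^ j % p : ℕ) : ZMod m)) ^ (p - 1))))
        = ((m / p : ℕ) : ZMod m) *
            (1 - ∏ j ∈ Finset.range (t p),
              (1 - ((s.choose (p ^ j) : ZMod m)
                - ((T / p ^ j % p : ℕ) : ZMod m)) ^ (p - 1))) := by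
      intro p hp
      simp only [map_mul, eval_C, map_sub, map_one, map_prod, map_pow, eval_esymm_bool, hs_def]
    rw [Finset.sum_congr rfl heval]
    rw [zmod_zero_iff_primes hm2 hsf]
    -- step: per-prime condition
    have key : ∀ p, ∀ hp : p ∈ m.primeFactors,
        ((ZMod.castHom (Nat.dvd_of_mem_primeFactors hp) (ZMod p))
          (∑ q ∈ m.primeFactors, ((m / q : ℕ) : ZMod m) *
            (1 - ∏ j ∈ Finset.range (t q),
              (1 - ((s.choose (q ^ j) : ZMod m)
                - ((T / q ^ j % q : ℕ) : ZMod m)) ^ (q - 1)))) = 0)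
        ↔ s ≡ T [MOD p ^ t p] := by
      intro p hp
      haveI : Fact p.Prime := ⟨Nat.prime_of_mem_primeFactors hp⟩
      have hpp : p.Prime := Nat.prime_of_mem_primeFactors hp
      rw [map_sum]
      have hzero : ∀ q ∈ m.primeFactors, q ≠ p →
          ((ZMod.castHom (Nat.dvd_of_mem_primeFactors hp) (ZMod p))
            (((m / q : ℕ) : ZMod m) *
              (1 - ∏ j ∈ Finset.range (t q),
                (1 - ((s.choose (q ^ j) : ZMod m)
                  - ((T / q ^ j % q : ℕ) : ZMod m)) ^ (q - 1))))) = 0 := by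
        intro q hq hne
        rw [map_mul, map_natCast]
        have hdq : p ∣ m / q := by
          have hqq : q.Prime := Nat.prime_of_mem_primeFactors hq
          have h1 : m / q * q = m := Nat.div_mul_cancel (Nat.dvd_of_mem_primeFactors hq)
          have h2 : p ∣ m / q * q := by rw [h1]; exact Nat.dvd_of_mem_primeFactors hp
          rcases (Nat.Prime.dvd_mul hpp).mp h2 with h | h
          · exact h
          · exact absurd ((Nat.prime_dvd_prime_iff_eq hpp hqq).mp h).symm hne
        rw [(ZMod.natCast_eq_zero_iff _ _).mpr hdq, zero_mul]
      rw [Finset.sum_eq_single_of_mem p hp hzero]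
      rw [map_mul, map_natCast]
      have hunit : ((m / p : ℕ) : ZMod p) ≠ 0 := by
        rw [Ne, ZMod.natCast_eq_zero_iff]
        intro hdvd
        have : p * p ∣ m := by
          obtain ⟨k, hk⟩ := hdvd
          exact ⟨k, by rw [mul_assoc, ← hk, Nat.mul_div_cancel' (Nat.dvd_of_mem_primeFactors hp)]⟩
        exact hpp.one_lt.ne' (Nat.isUnit_iff.mp (hsf p this))
      rw [mul_eq_zero, or_iff_right hunit]
      rw [map_sub, map_one, map_prod]
      rw [sub_eq_zero, eq_comm]
      have hfact : ∀ j ∈ Finset.range (t p),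
          ((ZMod.castHom (Nat.dvd_of_mem_primeFactors hp) (ZMod p))
            (1 - ((s.choose (p ^ j) : ZMod m) - ((T / p ^ j % p : ℕ) : ZMod m)) ^ (p - 1)))
          = 1 - ((s.choose (p ^ j) : ZMod p) - ((T / p ^ j % p : ℕ) : ZMod p)) ^ (p - 1) := by
        intro j hj
        rw [map_sub, map_one, map_pow, map_sub, map_natCast, map_natCast]
      rw [Finset.prod_congr rfl hfact]
      -- now a statement purely in ZMod p
      have hx : ∀ j, (((s.choose (p ^ j) : ZMod p) - ((T / p ^ j % p : ℕ) : ZMod p)) = 0)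
          ↔ s / p ^ j ≡ T / p ^ j [MOD p] := by
        intro j
        rw [sub_eq_zero, ZMod.natCast_eq_natCast_iff]
        constructor
        · intro h
          exact ((choose_pow_modEq_digit hpp s j).symm.trans h).trans (Nat.mod_modEq _ _)
        · intro h
          exact ((choose_pow_modEq_digit hpp s j).trans h).trans (Nat.mod_modEq _ _).symm
      constructor
      · intro hprod
        apply modEq_pow_of_digits
        intro j hj
        rw [← hx j]
        by_contra hne
        have hfj : (1 : ZMod p) - ((s.choose (p ^ j) : ZMod p)
            - ((T / p ^ j % p : ℕ) : ZMod p)) ^ (p - 1) = 0 := by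
          rw [ZMod.pow_card_sub_one_eq_one hne, sub_self]
        have := Finset.prod_eq_zero (f := fun j => (1:ZMod p) - ((s.choose (p ^ j) : ZMod p)
            - ((T / p ^ j % p : ℕ) : ZMod p)) ^ (p - 1)) (Finset.mem_range.mpr hj) hfj
        rw [this] at hprod
        exact one_ne_zero hprod.symm
      · intro hmod
        apply Finset.prod_eq_one
        intro j hj
        have := (hx j).mpr (digit_modEq_of_modEq_pow hpp.pos hmod (Finset.mem_range.mp hj))
        rw [this, zero_pow (by have := hpp.two_le; omega), sub_zero]
    -- combine over primes
    constructor
    · intro h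
      have hall : ∀ p ∈ m.primeFactors, s ≡ T [MOD p ^ t p] :=
        fun p hp => (key p hp).mp (h p hp)
      -- CRT conclusion
      have hdvd : ((∏ p ∈ m.primeFactors, p ^ t p : ℕ) : ℤ) ∣ (T : ℤ) - (s : ℤ) := by
        push_cast
        refine Finset.prod_dvd_of_coprime ?_ ?_
        · intro q hq q' hq' hne
          simp only [Function.onFun]
          refine IsCoprime.pow ?_
          rw [Nat.isCoprime_iff_coprime]
          exact (Nat.coprime_primes (Nat.prime_of_mem_primeFactors hq)
            (Nat.prime_of_mem_primeFactors hq')).mpr hne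
        · intro q hq
          have := (hall q hq).dvd
          exact_mod_cast this
      have hbig : n + 1 ≤ ∏ p ∈ m.primeFactors, p ^ t p := by
        calc n + 1 ≤ c ^ r := hcr
          _ = ∏ p ∈ m.primeFactors, c := by rw [Finset.prod_const, hr]
          _ ≤ ∏ p ∈ m.primeFactors, p ^ t p :=
            Finset.prod_le_prod (fun _ _ => Nat.zero_le _) hct
      have : (T : ℤ) - (s : ℤ) = 0 := by
        refine Int.eq_zero_of_abs_lt_dvd hdvd ?_
        have h1 : |(T : ℤ) - (s : ℤ)| ≤ n := by
          rw [abs_sub_le_iff]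
          constructor <;> [skip; skip] <;>
            · push_cast; omega
        calc |(T : ℤ) - (s : ℤ)| ≤ (n : ℤ) := h1
          _ < ((∏ p ∈ m.primeFactors, p ^ t p : ℕ) : ℤ) := by exact_mod_cast by omega
      omega
    · intro h p hp
      rw [key p hp]
      rw [h]
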